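/- If (x, y, z) is a primitive Pythagorean triple with y even and all of x, y, z decimal palindromes, then 5 divides x or 5 divides z (equivalently, 5 does not divide y). -/

import Mathlib

def IsDecimalPalindrome (n : ℕ) : Prop := (Nat.digits 10 n).reverse = Nat.digits 10 n

lemma mod5_lemma' : ∀ a b c : Fin 5,
    ((a:ℕ) ^ 2 % 5 + (b:ℕ) ^ 2 % 5) % 5 = (c:ℕ) ^ 2 % 5 → (a:ℕ) ≠ 0 → (c:ℕ) ≠ 0 → (b:ℕ) = 0 := by decide

lemma mod5_lemma : ∀ a < 5, ∀ b < 5, ∀ c < 5,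
    (a ^ 2 % 5 + b ^ 2 % 5) % 5 = c ^ 2 % 5 → a ≠ 0 → c ≠ 0 → b = 0 := by
  intro a ha b hb c hc
  exact mod5_lemma' ⟨a, ha⟩ ⟨b, hb⟩ ⟨c, hc⟩

lemma mod8_lemma' : ∀ a b c : Fin 8,
    ((a:ℕ) ^ 2 % 8 + (b:ℕ) ^ 2 % 8) % 8 = (c:ℕ) ^ 2 % 8 → (a:ℕ) % 2 = 1 → (c:ℕ) % 2 = 1 → (b:ℕ) % 4 = 0 := by decide

lemma mod8_lemma : ∀ a < 8, ∀ b < 8, ∀ c < 8,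
    (a ^ 2 % 8 + b ^ 2 % 8) % 8 = c ^ 2 % 8 → a % 2 = 1 → c % 2 = 1 → b % 4 = 0 := by
  intro a ha b hb c hc
  exact mod8_lemma' ⟨a, ha⟩ ⟨b, hb⟩ ⟨c, hc⟩

lemma mod2_lemma : ∀ a < 2, ∀ b < 2, ∀ c < 2,
    (a ^ 2 % 2 + b ^ 2 % 2) % 2 = c ^ 2 % 2 → b = 0 → a = c := by decide

theorem all_palindrome_triple_five_divides_leg_or_hyp (x y z : ℕ)
    (hx : 0 < x) (hy : 0 < y) (hz : 0 < z)
    (h : x ^ 2 + y ^ 2 = z ^ 2)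
    (hgcd : Nat.gcd x (Nat.gcd y z) = 1)
    (hey : Even y)
    (hpx : IsDecimalPalindrome x) (hpy : IsDecimalPalindrome y)
    (hpz : IsDecimalPalindrome z) :
    5 ∣ x ∨ 5 ∣ z := by
  by_contra hcon
  push_neg at hcon
  obtain ⟨h5x, h5z⟩ := hcon
  have hy2 : y % 2 = 0 := Nat.even_iff.mp hey
  -- mod equations
  have hmod : ∀ m : ℕ, (x ^ 2 % m + y ^ 2 % m) % m = z ^ 2 % m := by
    intro m; rw [← Nat.add_mod, h]
  -- x is odd
  have hx2 : x % 2 = 1 := by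
    rcases Nat.mod_two_eq_zero_or_one x with hx0 | hx1
    · -- then z even too, contradiction with gcd
      have hz2 : z % 2 = 0 := by
        have := mod2_lemma (x % 2) (Nat.mod_lt _ (by norm_num)) (y % 2)
          (Nat.mod_lt _ (by norm_num)) (z % 2) (Nat.mod_lt _ (by norm_num))
        have heq : (x % 2) ^ 2 % 2 + (y % 2) ^ 2 % 2 = ((x % 2) ^ 2 % 2 + (y % 2) ^ 2 % 2) := rfl
        have h2 := hmod 2
        rw [Nat.pow_mod x, Nat.pow_mod y, Nat.pow_mod z] at h2
        have := this h2 hy2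
        omega
      have : (2 : ℕ) ∣ Nat.gcd x (Nat.gcd y z) :=
        Nat.dvd_gcd (Nat.dvd_of_mod_eq_zero hx0)
          (Nat.dvd_gcd (Nat.dvd_of_mod_eq_zero hy2) (Nat.dvd_of_mod_eq_zero hz2))
      rw [hgcd] at this
      omega
    · exact hx1
  -- z is odd
  have hz2 : z % 2 = 1 := by
    have h2 := hmod 2
    rw [Nat.pow_mod x, Nat.pow_mod y, Nat.pow_mod z] at h2
    have := mod2_lemma (x % 2) (Nat.mod_lt _ (by norm_num)) (y % 2)
      (Nat.mod_lt _ (by norm_num)) (z % 2) (Nat.mod_lt _ (by norm_num)) h2 hy2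
    omega
  -- 4 ∣ y
  have h4y : y % 4 = 0 := by
    have h8 := hmod 8
    rw [Nat.pow_mod x, Nat.pow_mod y, Nat.pow_mod z] at h8
    have := mod8_lemma (x % 8) (Nat.mod_lt _ (by norm_num)) (y % 8)
      (Nat.mod_lt _ (by norm_num)) (z % 8) (Nat.mod_lt _ (by norm_num)) h8
      (by omega) (by omega)
    omega
  -- 5 ∣ y
  have h5y : y % 5 = 0 := by
    have h5 := hmod 5
    rw [Nat.pow_mod x, Nat.pow_mod y, Nat.pow_mod z] at h5
    have := mod5_lemma (x % 5) (Nat.mod_lt _ (by norm_num)) (y % 5)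
      (Nat.mod_lt _ (by norm_num)) (z % 5) (Nat.mod_lt _ (by norm_num)) h5
      (by intro hc; exact h5x (Nat.dvd_of_mod_eq_zero hc))
      (by intro hc; exact h5z (Nat.dvd_of_mod_eq_zero hc))
    omega
  -- so y % 10 = 0, palindrome contradiction
  have h10 : y % 10 = 0 := by omega
  have hdig : Nat.digits 10 y = y % 10 :: Nat.digits 10 (y / 10) :=
    Nat.digits_def' (by norm_num) hy
  have hlast : (Nat.digits 10 y).getLast (by rw [hdig]; simp) ≠ 0 :=
    Nat.getLast_digit_ne_zero 10 (by omega)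
  have hne : Nat.digits 10 y ≠ [] := by rw [hdig]; simp
  have hfirst : (Nat.digits 10 y).head? = some 0 := by rw [hdig, h10]; rfl
  have : (Nat.digits 10 y).getLast? = some 0 := by
    rw [← List.head?_reverse, hpy, hfirst]
  rw [List.getLast?_eq_getLast hne] at this
  exact hlast (Option.some_injective _ this)
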